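/- arXiv:1505.06096 — 2 statements merged into one kernel-verified Lean document; each statement's English description precedes it below -/
import Mathlib

section
/- Let G = W(C_n) be a whiskered cycle with edge ideal I, and suppose n = 2m+1 is odd, 1 ≤ m ≤ s, and M = (x_1x_2)(x_3x_4)⋯(x_{2m-1}x_{2m})·N with N ∈ I^{s-m}. Then for every j with 1 ≤ j ≤ 2n, the monomial x_n x_j · M lies in I^{s+1}. -/
open MvPolynomial
open Fin.NatCast

/-- The whiskered cycle `W(C_n)`: `Sum.inl i` is the cycle vertex `x_{i+1}` and
`Sum.inr i` is the whisker vertex `x_{n+i+1}`. -/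
def whiskerCycle (n : ℕ) [NeZero n] : SimpleGraph (Fin n ⊕ Fin n) :=
  SimpleGraph.fromRel (fun a b =>
    (∃ i : Fin n, a = Sum.inl i ∧ b = Sum.inl (i + 1)) ∨
    (∃ i : Fin n, a = Sum.inl i ∧ b = Sum.inr i))

/-- The edge ideal of a graph `G`. -/
noncomputable def edgeIdeal (K : Type*) [Field K] {V : Type*} (G : SimpleGraph V) :
    Ideal (MvPolynomial V K) :=
  Ideal.span {m | ∃ u v, G.Adj u v ∧ m = X u * X v}

lemma edge_mem (K : Type*) [Field K] {n : ℕ} [NeZero n]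
    {u v : Fin n ⊕ Fin n} (h : (whiskerCycle n).Adj u v) :
    X u * X v ∈ edgeIdeal K (whiskerCycle n) :=
  Ideal.subset_span ⟨u, v, h, rfl⟩

lemma adj_cycle {n : ℕ} [NeZero n] (hn : 2 ≤ n) (i : Fin n) :
    (whiskerCycle n).Adj (Sum.inl i) (Sum.inl (i + 1)) := by
  refine ⟨?_, Or.inl (Or.inl ⟨i, rfl, rfl⟩)⟩
  simp only [ne_eq, Sum.inl.injEq]
  intro h
  have h0 : (0 : Fin n) = 1 := by
    have := h
    nth_rewrite 1 [← add_zero i] at this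
    exact add_left_cancel this
  have := congrArg Fin.val h0
  rw [Fin.val_zero, Fin.val_one'] at this
  rw [Nat.mod_eq_of_lt (by omega)] at this
  omega

lemma adj_whisker {n : ℕ} [NeZero n] (i : Fin n) :
    (whiskerCycle n).Adj (Sum.inr i) (Sum.inl i) := by
  exact ⟨by simp, Or.inr (Or.inr ⟨i, rfl, rfl⟩)⟩

lemma prod_mem_pow {R : Type*} [CommRing R] (I : Ideal R) (f : ℕ → R) :
    ∀ m : ℕ, (∀ t < m, f t ∈ I) → ∏ t ∈ Finset.range m, f t ∈ I ^ m := by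
  intro m
  induction m with
  | zero => simp
  | succ k ih =>
    intro h
    rw [Finset.prod_range_succ, pow_succ]
    exact Ideal.mul_mem_mul (ih fun t ht => h t (by omega)) (h k (by omega))

lemma prod_range_pair {M : Type*} [CommMonoid M] (g : ℕ → M) :
    ∀ m : ℕ, ∏ k ∈ Finset.range (2 * m), g k
      = ∏ t ∈ Finset.range m, (g (2 * t) * g (2 * t + 1)) := by
  intro m
  induction m with
  | zero => simp
  | succ k ih =>
    rw [Finset.prod_range_succ, ← ih, show 2 * (k + 1) = (2 * k + 1) + 1 by ring,
      Finset.prod_range_succ, Finset.prod_range_succ, mul_assoc]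

/-- for `n = 2m+1` odd, `1 ≤ m ≤ s`, and
`M = (x_1x_2)(x_3x_4)⋯(x_{2m-1}x_{2m})·N` with `N ∈ I^{s-m}`, for every
vertex `x_j` (`1 ≤ j ≤ 2n`) we have `x_n x_j · M ∈ I^{s+1}`. -/
theorem xn_mul_all_mem (K : Type*) [Field K] (n m s : ℕ) [NeZero n]
    (hn : n = 2 * m + 1) (hm : 1 ≤ m) (hms : m ≤ s)
    (N M : MvPolynomial (Fin n ⊕ Fin n) K)
    (hN : N ∈ edgeIdeal K (whiskerCycle n) ^ (s - m))
    (hM : M = (∏ t ∈ Finset.range m,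
        X (Sum.inl ((2 * t : ℕ) : Fin n)) * X (Sum.inl ((2 * t + 1 : ℕ) : Fin n))) * N) :
    ∀ j : Fin n ⊕ Fin n,
      X (Sum.inl ((n - 1 : ℕ) : Fin n)) * X j * M ∈
        edgeIdeal K (whiskerCycle n) ^ (s + 1) := by
  intro j
  have hn2 : 2 ≤ n := by omega
  set I := edgeIdeal K (whiskerCycle n) with hI
  set XX : (Fin n ⊕ Fin n) → MvPolynomial (Fin n ⊕ Fin n) K := X with hXX
  have hsplit : (∏ i : Fin n, XX (Sum.inl i))
      = XX (Sum.inl ((n - 1 : ℕ) : Fin n)) *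
      ∏ t ∈ Finset.range m,
        XX (Sum.inl ((2 * t : ℕ) : Fin n)) * XX (Sum.inl ((2 * t + 1 : ℕ) : Fin n)) := by
    have h1 := Fin.prod_univ_eq_prod_range
      (fun k => XX (Sum.inl ((k : ℕ) : Fin n))) n
    simp only [Fin.cast_val_eq_self] at h1
    rw [h1, show Finset.range n = Finset.range (2 * m + 1) by rw [hn],
      Finset.prod_range_succ, prod_range_pair]
    rw [show (n - 1 : ℕ) = 2 * m by omega]
    ring
  have key2 : XX j * ∏ i : Fin n, XX (Sum.inl i) ∈ I ^ (m + 1) := by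
    obtain ⟨a, ha⟩ : ∃ a : Fin n, (whiskerCycle n).Adj j (Sum.inl a) := by
      cases j with
      | inl i => exact ⟨i + 1, adj_cycle hn2 i⟩
      | inr i => exact ⟨i, adj_whisker i⟩
    have hre : (∏ i : Fin n, XX (Sum.inl i))
        = ∏ i : Fin n, XX (Sum.inl (a + i)) :=
      (Equiv.prod_comp (Equiv.addLeft a) (fun i => XX (Sum.inl i))).symm
    have h1 := Fin.prod_univ_eq_prod_range
      (fun k => XX (Sum.inl (a + (k : Fin n)))) n
    simp only [Fin.cast_val_eq_self] at h1
    rw [hre, h1, show Finset.range n = Finset.range (2 * m + 1) by rw [hn],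
      Finset.prod_range_succ']
    rw [prod_range_pair (fun k => XX (Sum.inl (a + ((k + 1 : ℕ) : Fin n))))]
    have hfac : (∏ t ∈ Finset.range m,
        (XX (Sum.inl (a + ((2 * t + 1 : ℕ) : Fin n))) *
          XX (Sum.inl (a + ((2 * t + 1 + 1 : ℕ) : Fin n))))) ∈ I ^ m := by
      refine prod_mem_pow I _ m fun t ht => ?_
      have hc : a + ((2 * t + 1 + 1 : ℕ) : Fin n)
          = (a + ((2 * t + 1 : ℕ) : Fin n)) + 1 := by
        push_cast
        simp only [add_assoc]
      rw [hc, hXX]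
      exact edge_mem K (adj_cycle hn2 _)
    have hja : XX j * XX (Sum.inl a) ∈ I := edge_mem K ha
    have hmm : (∏ t ∈ Finset.range m,
        (XX (Sum.inl (a + ((2 * t + 1 : ℕ) : Fin n))) *
          XX (Sum.inl (a + ((2 * t + 1 + 1 : ℕ) : Fin n))))) *
        (XX j * XX (Sum.inl a)) ∈ I ^ m * I :=
      Ideal.mul_mem_mul hfac hja
    rw [← pow_succ] at hmm
    simp only [Nat.cast_zero, add_zero]
    rw [mul_left_comm]
    exact hmm
  have heq : XX (Sum.inl ((n - 1 : ℕ) : Fin n)) * XX j * M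
      = (XX j * ∏ i : Fin n, XX (Sum.inl i)) * N := by
    rw [hM, hsplit]
    ring
  show XX (Sum.inl ((n - 1 : ℕ) : Fin n)) * XX j * M ∈ I ^ (s + 1)
  rw [heq]
  have hfin := Ideal.mul_mem_mul key2 hN
  rw [← pow_add] at hfin
  rw [show s + 1 = m + 1 + (s - m) by omega]
  exact hfin
end

section
/- Let G = W(C_n) with edge ideal I, n = 2m-1 odd, 2 ≤ m ≤ s, and M = (x_1x_2)(x_3x_4)⋯(x_{2m-3}x_{2m-2})(x_{2m-1}x_1)·N with N ∈ I^{s-m}. Then x_{n+1} x_j · M ∈ I^{s+1} for every 1 ≤ j ≤ 2n. -/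
open MvPolynomial
open Fin.NatCast

/- ### Auxiliary lemmas -/

/-- Pairing up a product. -/
lemma aux_prod_pairs {R : Type*} [CommRing R] (f : ℕ → R) (k : ℕ) :
    ∏ t ∈ Finset.range k, (f (2*t) * f (2*t+1)) = ∏ t ∈ Finset.range (2*k), f t := by
  induction k with
  | zero => simp
  | succ k ih =>
      rw [Finset.prod_range_succ, ih, show 2*(k+1) = 2*k+1+1 by ring,
        Finset.prod_range_succ, Finset.prod_range_succ, mul_assoc]

/-- Shift invariance of the full cycle product. -/
lemma aux_shift (K : Type*) [Field K] (n : ℕ) [NeZero n] (a : ℕ) :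
    ∏ t ∈ Finset.range n, (X (Sum.inl ((a + t : ℕ) : Fin n)) : MvPolynomial (Fin n ⊕ Fin n) K)
      = ∏ i : Fin n, X (Sum.inl i) := by
  rw [← Fin.prod_univ_eq_prod_range (fun t => (X (Sum.inl ((a + t : ℕ) : Fin n)) :
    MvPolynomial (Fin n ⊕ Fin n) K)) n]
  have h : ∀ i : Fin n, ((a + (i : ℕ) : ℕ) : Fin n) = (a : Fin n) + i := by
    intro i; push_cast [Fin.cast_val_eq_self]; ring
  calc ∏ i : Fin n, (X (Sum.inl ((a + (i : ℕ) : ℕ) : Fin n)) : MvPolynomial (Fin n ⊕ Fin n) K)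
      = ∏ i : Fin n, X (Sum.inl ((a : Fin n) + i)) := by
        exact Finset.prod_congr rfl (fun i _ => by rw [h i])
    _ = ∏ i : Fin n, X (Sum.inl i) :=
        Equiv.prod_comp (Equiv.addLeft (a : Fin n)) (fun i => X (Sum.inl i))

/-- The chain of `m` consecutive edges starting anywhere covers the whole cycle. -/
lemma aux_chain (K : Type*) [Field K] (n m : ℕ) [NeZero n]
    (hn : n = 2 * m - 1) (hm : 2 ≤ m) (a : ℕ) :
    (∏ t ∈ Finset.range (m - 1),
        (X (Sum.inl ((a + 2*t : ℕ) : Fin n)) : MvPolynomial (Fin n ⊕ Fin n) K) *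
          X (Sum.inl ((a + 2*t + 1 : ℕ) : Fin n))) *
      X (Sum.inl ((a + (n - 1) : ℕ) : Fin n)) = ∏ i : Fin n, X (Sum.inl i) := by
  have h1 := aux_prod_pairs (fun t => (X (Sum.inl ((a + t : ℕ) : Fin n)) :
    MvPolynomial (Fin n ⊕ Fin n) K)) (m - 1)
  have h2 : ∀ t : ℕ, a + (2*t) = a + 2*t := fun t => rfl
  have h3 : ∀ t : ℕ, a + (2*t+1) = a + 2*t + 1 := fun t => by ring
  simp only [h3] at h1
  rw [h1, show 2*(m-1) = n - 1 by omega]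
  have h4 := Finset.prod_range_succ (fun t => (X (Sum.inl ((a + t : ℕ) : Fin n)) :
    MvPolynomial (Fin n ⊕ Fin n) K)) (n - 1)
  have h5 : n - 1 + 1 = n := by have := NeZero.pos n; omega
  rw [h5] at h4
  rw [← h4, aux_shift]

lemma aux_edge_mem (K : Type*) [Field K] {V : Type*} {G : SimpleGraph V} {u v : V}
    (h : G.Adj u v) : X u * X v ∈ edgeIdeal K G :=
  Ideal.subset_span ⟨u, v, h, rfl⟩

lemma aux_prod_mem_pow {R : Type*} [CommRing R] {I : Ideal R} (g : ℕ → R) (k : ℕ)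
    (h : ∀ t ∈ Finset.range k, g t ∈ I) : ∏ t ∈ Finset.range k, g t ∈ I ^ k := by
  induction k with
  | zero => simp
  | succ k ih =>
      rw [Finset.prod_range_succ, pow_succ]
      exact Ideal.mul_mem_mul (ih (fun t ht => h t (Finset.mem_range.2
        (by have := Finset.mem_range.1 ht; omega)))) (h k (Finset.mem_range.2 (by omega)))

/-- Adjacency of consecutive cycle vertices. -/
lemma aux_adj_cycle (n : ℕ) [NeZero n] (hn2 : 2 ≤ n) (i : Fin n) :
    (whiskerCycle n).Adj (Sum.inl i) (Sum.inl (i + 1)) := by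
  rw [whiskerCycle, SimpleGraph.fromRel_adj]
  refine ⟨?_, Or.inl (Or.inl ⟨i, rfl, rfl⟩)⟩
  intro h
  have h1 : i = i + 1 := by simpa using h
  have h2 : (1 : Fin n) = 0 := left_eq_add.mp h1
  have h3 := Fin.one_eq_zero_iff.mp h2
  omega

/-- Adjacency of a whisker vertex with its cycle vertex. -/
lemma aux_adj_whisker (n : ℕ) [NeZero n] (i : Fin n) :
    (whiskerCycle n).Adj (Sum.inr i) (Sum.inl i) := by
  rw [whiskerCycle, SimpleGraph.fromRel_adj]
  exact ⟨by simp, Or.inr (Or.inr ⟨i, rfl, rfl⟩)⟩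

/-- for `n = 2m-1` odd with `2 ≤ m ≤ s`, if
`M = (x_1x_2)(x_3x_4)⋯(x_{2m-3}x_{2m-2})(x_{2m-1}x_1)·N` with `N ∈ I^{s-m}`,
then `x_{n+1} x_j · M ∈ I^{s+1}` for every vertex `x_j`, `1 ≤ j ≤ 2n`.  (Here `x_j = X (Sum.inl (j-1))` for
`1 ≤ j ≤ n` and `x_{n+1} = X (Sum.inr 0)`.) -/
theorem whisker_mul_all_mem (K : Type*) [Field K] (n m s : ℕ) [NeZero n]
    (hn : n = 2 * m - 1) (hm : 2 ≤ m) (hms : m ≤ s)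
    (N M : MvPolynomial (Fin n ⊕ Fin n) K)
    (hN : N ∈ edgeIdeal K (whiskerCycle n) ^ (s - m))
    (hM : M = (∏ t ∈ Finset.range (m - 1),
        X (Sum.inl ((2 * t : ℕ) : Fin n)) * X (Sum.inl ((2 * t + 1 : ℕ) : Fin n))) *
      (X (Sum.inl ((n - 1 : ℕ) : Fin n)) * X (Sum.inl (0 : Fin n))) * N) :
    ∀ j : Fin n ⊕ Fin n,
      X (Sum.inr (0 : Fin n)) * X j * M ∈ edgeIdeal K (whiskerCycle n) ^ (s + 1) := by
  have hn2 : 2 ≤ n := by omega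
  set I := edgeIdeal K (whiskerCycle n) with hI
  -- the key step, for any vertex j adjacent to a cycle vertex c
  have key : ∀ (j : Fin n ⊕ Fin n) (c : Fin n), (whiskerCycle n).Adj j (Sum.inl c) →
      X (Sum.inr (0 : Fin n)) * X j * M ∈ I ^ (s + 1) := by
    intro j c hadj
    -- rewrite the product as a product of m+1 edges times N
    have heq : X (Sum.inr (0 : Fin n)) * X j * M =
        (X (Sum.inr (0 : Fin n)) * X (Sum.inl (0 : Fin n))) *
        ((X j * X (Sum.inl c)) *
          (∏ t ∈ Finset.range (m - 1),
            X (Sum.inl (((c : ℕ) + 1 + 2*t : ℕ) : Fin n)) *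
              X (Sum.inl (((c : ℕ) + 1 + 2*t + 1 : ℕ) : Fin n)))) * N := by
      have h0 := aux_chain K n m hn hm 0
      simp only [Nat.zero_add] at h0
      have hc := aux_chain K n m hn hm ((c : ℕ) + 1)
      have hcast : ((((c : ℕ) + 1 + (n - 1)) : ℕ) : Fin n) = c := by
        have h1 : (c : ℕ) + 1 + (n - 1) = (c : ℕ) + n := by omega
        rw [h1, Nat.cast_add, Fin.natCast_self, add_zero, Fin.cast_val_eq_self]
      rw [hcast] at hc
      rw [hM]
      have h0' : (∏ t ∈ Finset.range (m - 1),
          (X (Sum.inl ((2 * t : ℕ) : Fin n)) : MvPolynomial (Fin n ⊕ Fin n) K) *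
            X (Sum.inl ((2 * t + 1 : ℕ) : Fin n))) * X (Sum.inl ((n - 1 : ℕ) : Fin n)) =
          ∏ i : Fin n, X (Sum.inl i) := h0
      have hz : (X (Sum.inl ((0 : ℕ) : Fin n)) : MvPolynomial (Fin n ⊕ Fin n) K)
          = X (Sum.inl (0 : Fin n)) := by norm_num
      linear_combination (X (Sum.inr (0 : Fin n)) * X j * X (Sum.inl (0 : Fin n)) * N) * h0'
        - (X (Sum.inr (0 : Fin n)) * X (Sum.inl (0 : Fin n)) * X j * N) * hc
    rw [heq]
    have hsplit : I ^ (s + 1) = I * (I * I ^ (m - 1)) * I ^ (s - m) := by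
      rw [show s + 1 = 1 + (1 + (m - 1)) + (s - m) by omega, pow_add, pow_add, pow_add, pow_one]
    rw [hsplit]
    refine Ideal.mul_mem_mul (Ideal.mul_mem_mul ?_ (Ideal.mul_mem_mul ?_ ?_)) hN
    · exact aux_edge_mem K ((aux_adj_whisker n 0))
    · exact aux_edge_mem K hadj
    · refine aux_prod_mem_pow _ _ (fun t _ => ?_)
      have hstep : (((c : ℕ) + 1 + 2*t + 1 : ℕ) : Fin n)
          = (((c : ℕ) + 1 + 2*t : ℕ) : Fin n) + 1 := by push_cast; ring
      rw [hstep]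
      exact aux_edge_mem K (aux_adj_cycle n hn2 _)
  intro j
  cases j with
  | inl i => exact key (Sum.inl i) (i + 1) (aux_adj_cycle n hn2 i)
  | inr k => exact key (Sum.inr k) k (aux_adj_whisker n k)
end
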